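/- For all integers k ≥ 2 and ℓ ≥ 0, there exists a (kℓ+1)-extendable linear k-uniform hypergraph, i.e., a linear k-uniform hypergraph in which all vertices have degree kℓ+1 except exactly one vertex of degree kℓ. -/

import Mathlib

open Finset
set_option linter.unusedSectionVars false
open scoped Classical

variable {V : Type*}

/-- Degree of a vertex: number of edges containing it. -/
noncomputable def degree (E : Finset (Finset V)) (v : V) : ℕ :=
  (E.filter (fun e => v ∈ e)).card

/-- `E` is `k`-uniform. -/
def Uniform (E : Finset (Finset V)) (k : ℕ) : Prop := ∀ e ∈ E, e.card = k

/-- `E` is linear: two distinct edges share at most one vertex. -/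
noncomputable def Linear (E : Finset (Finset V)) : Prop :=
  ∀ e ∈ E, ∀ f ∈ E, e ≠ f → (e ∩ f).card ≤ 1

/-- The set of matchings of `E`: subsets of pairwise disjoint edges. -/
noncomputable def matchings (E : Finset (Finset V)) : Finset (Finset (Finset V)) :=
  E.powerset.filter (fun M => ∀ e ∈ M, ∀ f ∈ M, e ≠ f → Disjoint e f)

/-- Probability that a uniformly random matching of `E` leaves `v` uncovered. -/
noncomputable def uncovProb (E : Finset (Finset V)) (v : V) : ℝ :=
  (((matchings E).filter (fun M => ∀ e ∈ M, v ∉ e)).card : ℝ) / ((matchings E).card : ℝ)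

namespace ExtProof

variable (k l q : ℕ) [NeZero k] [NeZero q]

abbrev Vt := (Fin k × ZMod q) ⊕ Unit

/-- point vertex -/
abbrev pt (i : Fin k) (y : ZMod q) : Vt k q := Sum.inl (i, y)

/-- head vertex -/
abbrev hd : Vt k q := Sum.inr ()

/-- slope of the s-th line family -/
def sl (s : Fin (k*l)) : ZMod q := (((s : ℕ) + 1 : ℕ) : ZMod q)

def linE (s : Fin (k*l)) (b : ZMod q) : Finset (Vt k q) :=
  univ.image fun i : Fin k => pt k q i (sl k l q s * ((i : ℕ) : ZMod q) + b)

def rowE (c : ZMod q) : Finset (Vt k q) :=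
  if c.val < k*l then
    insert (hd k q) ((univ.filter fun i : Fin k => (i : ℕ) ≠ 0).image fun i => pt k q i c)
  else univ.image fun i : Fin k => pt k q i c

def colE (g : Fin l) : Finset (Vt k q) :=
  univ.image fun r : Fin k => pt k q 0 ((((g : ℕ) * k + (r : ℕ) : ℕ)) : ZMod q)

def E1 : Finset (Finset (Vt k q)) :=
  (univ : Finset (Fin (k*l) × ZMod q)).image fun p => linE k l q p.1 p.2
def E2 : Finset (Finset (Vt k q)) :=
  (univ : Finset (ZMod q)).image fun c => rowE k l q c
def E3 : Finset (Finset (Vt k q)) :=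
  (univ : Finset (Fin l)).image fun g => colE k l q g

def Edges : Finset (Finset (Vt k q)) := E1 k l q ∪ (E2 k l q ∪ E3 k l q)

variable {k l q}

/-! ### basic cast lemmas -/

lemma cast_inj_of_lt {m n : ℕ} (hm : m < q) (hn : n < q) (h : (m : ZMod q) = n) : m = n := by
  have := congrArg ZMod.val h
  rwa [ZMod.val_cast_of_lt hm, ZMod.val_cast_of_lt hn] at this

section hyp
variable (hk : 2 ≤ k) (hq : k*l + k < q)

include hq in
lemma finCast_inj {i j : Fin k} (h : ((i : ℕ) : ZMod q) = ((j : ℕ) : ZMod q)) : i = j := by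
  have hkq : k ≤ q := by omega
  exact Fin.ext (cast_inj_of_lt (lt_of_lt_of_le i.2 hkq) (lt_of_lt_of_le j.2 hkq) h)

include hq in
lemma sl_inj {s s' : Fin (k*l)} (h : sl k l q s = sl k l q s') : s = s' := by
  have h1 : (s : ℕ) + 1 < q := by have := s.2; omega
  have h2 : (s' : ℕ) + 1 < q := by have := s'.2; omega
  exact Fin.ext (by have := cast_inj_of_lt h1 h2 h; omega)

include hq in
lemma sl_ne_zero (s : Fin (k*l)) : sl k l q s ≠ 0 := by
  intro h
  have h1 : (s : ℕ) + 1 < q := by have := s.2; omega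
  unfold sl at h
  have := congrArg ZMod.val h
  rw [ZMod.val_cast_of_lt h1, ZMod.val_zero] at this
  omega

/-! ### membership lemmas -/

lemma mem_linE {i : Fin k} {y : ZMod q} {s : Fin (k*l)} {b : ZMod q} :
    pt k q i y ∈ linE k l q s b ↔ y = sl k l q s * ((i : ℕ) : ZMod q) + b := by
  simp only [linE, mem_image, mem_univ, true_and, pt, Sum.inl.injEq, Prod.mk.injEq]
  constructor
  · rintro ⟨a, rfl, rfl⟩; rfl
  · rintro rfl; exact ⟨i, rfl, rfl⟩

lemma hd_not_mem_linE {s : Fin (k*l)} {b : ZMod q} : hd k q ∉ linE k l q s b := by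
  simp [linE, hd, pt]

lemma mem_rowE {i : Fin k} {y c : ZMod q} :
    pt k q i y ∈ rowE k l q c ↔ (y = c ∧ (c.val < k*l → (i : ℕ) ≠ 0)) := by
  unfold rowE
  split_ifs with h
  · simp only [mem_insert, pt, hd, mem_image, mem_filter, mem_univ, true_and,
      Sum.inl.injEq, Prod.mk.injEq, reduceCtorEq, false_or]
    constructor
    · rintro ⟨a, ha, rfl, rfl⟩; exact ⟨rfl, fun _ => ha⟩
    · rintro ⟨rfl, h2⟩; exact ⟨i, h2 h, rfl, rfl⟩
  · simp only [mem_image, mem_univ, true_and, pt, Sum.inl.injEq, Prod.mk.injEq]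
    constructor
    · rintro ⟨a, rfl, rfl⟩; exact ⟨rfl, fun hc => absurd hc h⟩
    · rintro ⟨rfl, -⟩; exact ⟨i, rfl, rfl⟩

lemma hd_mem_rowE {c : ZMod q} : hd k q ∈ rowE k l q c ↔ c.val < k*l := by
  unfold rowE
  split_ifs with h
  · simp [h]
  · simp [hd, pt, h]

lemma hd_not_mem_colE {g : Fin l} : hd k q ∉ colE k l q g := by
  simp [colE, hd, pt]

lemma mem_colE {i : Fin k} {y : ZMod q} {g : Fin l} :
    pt k q i y ∈ colE k l q g ↔ (i = 0 ∧ ∃ r : Fin k, y = ((((g : ℕ) * k + (r : ℕ) : ℕ)) : ZMod q)) := by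
  simp only [colE, mem_image, mem_univ, true_and, pt, Sum.inl.injEq, Prod.mk.injEq]
  constructor
  · rintro ⟨r, rfl, rfl⟩; exact ⟨rfl, r, rfl⟩
  · rintro ⟨rfl, r, rfl⟩; exact ⟨r, rfl, rfl⟩

include hq in
lemma col_val_lt {g : Fin l} {r : Fin k} : (g : ℕ) * k + (r : ℕ) < k*l ∧ (g : ℕ) * k + (r : ℕ) < q := by
  have hg := g.2
  have hr := r.2
  have : (g : ℕ) * k + (r : ℕ) < k * l := by
    calc (g : ℕ) * k + (r : ℕ) < (g : ℕ) * k + k := by omega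
    _ = ((g : ℕ) + 1) * k := by ring
    _ ≤ l * k := Nat.mul_le_mul_right k (by omega)
    _ = k * l := Nat.mul_comm l k
  exact ⟨this, by omega⟩

include hq in
lemma mem_colE' {i : Fin k} {y : ZMod q} {g : Fin l} :
    pt k q i y ∈ colE k l q g ↔ (i = 0 ∧ y.val < k*l ∧ (g : ℕ) = y.val / k) := by
  rw [mem_colE]
  constructor
  · rintro ⟨rfl, r, rfl⟩
    obtain ⟨h1, h2⟩ := col_val_lt (g := g) (r := r) hq
    rw [ZMod.val_cast_of_lt h2]
    refine ⟨rfl, h1, ?_⟩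
    rw [Nat.mul_comm (g : ℕ) k, Nat.mul_add_div (by omega : 0 < k),
      Nat.div_eq_of_lt r.2, Nat.add_zero]
  · rintro ⟨rfl, h1, h2⟩
    have hk0 : 0 < k := Nat.pos_of_ne_zero (NeZero.ne k)
    refine ⟨rfl, ⟨⟨y.val % k, Nat.mod_lt _ hk0⟩, ?_⟩⟩
    show y = (((g : ℕ) * k + y.val % k : ℕ) : ZMod q)
    have hgk : (g : ℕ) * k + y.val % k = y.val := by
      rw [h2]; exact Nat.div_add_mod' y.val k
    rw [hgk, ZMod.natCast_zmod_val]



/-! ### cardinalities of edges -/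

lemma pt_inj {f : Fin k → ZMod q} : Function.Injective (fun i : Fin k => pt k q i (f i)) := by
  intro a b h
  simpa [pt] using congrArg (fun v => match v with | Sum.inl p => p.1 | Sum.inr _ => a) h

lemma card_linE {s : Fin (k*l)} {b : ZMod q} : (linE k l q s b).card = k := by
  rw [linE, card_image_of_injective _ pt_inj, card_univ, Fintype.card_fin]

include hk in
lemma card_rowE {c : ZMod q} : (rowE k l q c).card = k := by
  unfold rowE
  split_ifs with h
  · rw [card_insert_of_notMem (by simp [hd, pt]), card_image_of_injective _ pt_inj]
    have : (univ.filter fun i : Fin k => (i : ℕ) ≠ 0) = univ.erase 0 := by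
      ext i
      simp only [mem_filter, mem_univ, true_and, mem_erase, and_true, ne_eq]
      rw [Fin.ext_iff, Fin.val_zero]
    rw [this, card_erase_of_mem (mem_univ _), card_univ, Fintype.card_fin]
    omega
  · rw [card_image_of_injective _ pt_inj, card_univ, Fintype.card_fin]

include hq in
lemma card_colE {g : Fin l} : (colE k l q g).card = k := by
  rw [colE, card_image_of_injOn, card_univ, Fintype.card_fin]
  intro r _ r' _ h
  simp only [pt, Sum.inl.injEq, Prod.mk.injEq, true_and] at h
  have h1 := (col_val_lt (g := g) (r := r) hq).2
  have h2 := (col_val_lt (g := g) (r := r') hq).2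
  have := cast_inj_of_lt h1 h2 h
  exact Fin.ext (by omega)

/-! ### distinctness of edges -/

include hk in
lemma val_one : ((1 : Fin k) : ℕ) = 1 := by
  rw [Fin.val_one']
  exact Nat.mod_eq_of_lt hk

lemma val_zero : ((0 : Fin k) : ℕ) = 0 := Fin.val_zero k

include hk hq in
lemma linE_inj {s s' : Fin (k*l)} {b b' : ZMod q}
    (h : linE k l q s b = linE k l q s' b') : s = s' ∧ b = b' := by
  have e0 : pt k q 0 b ∈ linE k l q s b := mem_linE.2 (by rw [val_zero]; simp)
  have e1 : pt k q 1 (sl k l q s + b) ∈ linE k l q s b :=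
    mem_linE.2 (by rw [val_one hk]; simp)
  rw [h] at e0 e1
  rw [mem_linE, val_zero] at e0
  rw [mem_linE, val_one hk] at e1
  simp only [Nat.cast_zero, mul_zero, zero_add, Nat.cast_one, mul_one] at e0 e1
  subst e0
  have hs : sl k l q s = sl k l q s' := by
    have := e1
    exact add_right_cancel this
  exact ⟨sl_inj hq hs, rfl⟩

include hk in
lemma pt_one_mem_rowE {c : ZMod q} : pt k q 1 c ∈ rowE k l q c := by
  rw [mem_rowE]
  exact ⟨rfl, fun _ => by rw [val_one hk]; omega⟩

include hk in
lemma rowE_inj {l : ℕ} {c c' : ZMod q} (h : rowE k l q c = rowE k l q c') : c = c' := by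
  have := pt_one_mem_rowE (l := l) (c := c) hk
  rw [h, mem_rowE] at this
  exact this.1

include hq in
lemma pt_col_mem_colE {g : Fin l} {r : Fin k} :
    pt k q 0 ((((g : ℕ) * k + (r : ℕ) : ℕ)) : ZMod q) ∈ colE k l q g :=
  mem_colE.2 ⟨rfl, r, rfl⟩

include hq in
lemma colE_inj {g g' : Fin l} (h : colE k l q g = colE k l q g') : g = g' := by
  have h1 := pt_col_mem_colE (g := g) (r := 0) hq
  have h2 := h1
  rw [h] at h2
  rw [mem_colE' hq] at h1 h2
  exact Fin.ext (h1.2.2.symm ▸ h2.2.2 ▸ rfl)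

include hk hq in
lemma linE_ne_rowE {s : Fin (k*l)} {b c : ZMod q} : linE k l q s b ≠ rowE k l q c := by
  intro h
  by_cases hc : c.val < k*l
  · have := hd_mem_rowE.2 hc
    rw [← h] at this
    exact hd_not_mem_linE this
  · have h0 : pt k q 0 c ∈ rowE k l q c := mem_rowE.2 ⟨rfl, fun hx => absurd hx hc⟩
    have h1 := pt_one_mem_rowE (l := l) (c := c) hk
    rw [← h, mem_linE, val_zero] at h0
    rw [← h, mem_linE, val_one hk] at h1
    simp only [Nat.cast_zero, mul_zero, zero_add, Nat.cast_one, mul_one] at h0 h1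
    apply sl_ne_zero hq s
    have : sl k l q s + b = b := by rw [← h1, h0]
    simpa using this

include hk hq in
lemma linE_ne_colE {s : Fin (k*l)} {b : ZMod q} {g : Fin l} : linE k l q s b ≠ colE k l q g := by
  intro h
  have h0 := pt_col_mem_colE (g := g) (r := 0) hq
  have h1 := pt_col_mem_colE (g := g) (r := ⟨1, by omega⟩) hq
  rw [← h, mem_linE, val_zero] at h0 h1
  simp only [Nat.cast_zero, mul_zero, zero_add] at h0 h1
  have hbound : (g : ℕ) * k + k ≤ k * l := by
    have := g.2
    calc (g : ℕ) * k + k = ((g : ℕ) + 1) * k := by ring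
    _ ≤ l * k := Nat.mul_le_mul_right k (by omega)
    _ = k * l := Nat.mul_comm l k
  have hval := cast_inj_of_lt (q := q) (m := (g : ℕ) * k + 0) (n := (g : ℕ) * k + 1)
    (by omega) (by omega) (h0.trans h1.symm)
  omega

include hk in
lemma pt_one_not_mem_colE {y : ZMod q} {g : Fin l} : pt k q 1 y ∉ colE k l q g := by
  rw [mem_colE]
  rintro ⟨h1, -⟩
  have := congrArg Fin.val h1
  rw [val_one hk, val_zero] at this
  omega

include hk in
lemma rowE_ne_colE {c : ZMod q} {g : Fin l} : rowE k l q c ≠ colE k l q g := by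
  intro h
  have := pt_one_mem_rowE (l := l) (c := c) hk
  rw [h] at this
  exact pt_one_not_mem_colE hk this

/-! ### counting lemmas -/

include hq in
lemma countL_pt {i : Fin k} {y : ZMod q} :
    ((univ : Finset (Fin (k*l) × ZMod q)).filter fun p =>
      pt k q i y ∈ linE k l q p.1 p.2).card = k * l := by
  have himg : ((univ : Finset (Fin (k*l) × ZMod q)).filter fun p =>
      pt k q i y ∈ linE k l q p.1 p.2)
      = univ.image (fun s : Fin (k*l) => (s, y - sl k l q s * ((i : ℕ) : ZMod q))) := by
    ext ⟨s, b⟩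
    simp only [mem_filter, mem_univ, true_and, mem_image, mem_linE, Prod.mk.injEq]
    constructor
    · intro hy
      exact ⟨s, rfl, by rw [hy]; ring⟩
    · rintro ⟨s', rfl, rfl⟩
      ring
  rw [himg, card_image_of_injective, card_univ, Fintype.card_fin]
  intro a b hab
  exact congrArg Prod.fst hab

lemma countL_hd :
    ((univ : Finset (Fin (k*l) × ZMod q)).filter fun p =>
      hd k q ∈ linE k l q p.1 p.2).card = 0 := by
  rw [card_eq_zero, eq_empty_iff_forall_notMem]
  intro p hp
  exact hd_not_mem_linE (mem_filter.1 hp).2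

include hq in
lemma card_val_lt {n : ℕ} (hn : n ≤ q) :
    ((univ : Finset (ZMod q)).filter fun c => c.val < n).card = n := by
  have himg : ((univ : Finset (ZMod q)).filter fun c => c.val < n)
      = univ.image (fun m : Fin n => ((m : ℕ) : ZMod q)) := by
    ext c
    simp only [mem_filter, mem_univ, true_and, mem_image]
    constructor
    · intro hc
      exact ⟨⟨c.val, hc⟩, ZMod.natCast_zmod_val c⟩
    · rintro ⟨m, rfl⟩
      rw [ZMod.val_cast_of_lt (lt_of_lt_of_le m.2 hn)]
      exact m.2
  rw [himg, card_image_of_injOn, card_univ, Fintype.card_fin]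
  intro a _ b _ h
  exact Fin.ext (cast_inj_of_lt (lt_of_lt_of_le a.2 hn) (lt_of_lt_of_le b.2 hn) h)

include hq in
lemma countR_hd :
    ((univ : Finset (ZMod q)).filter fun c => hd k q ∈ rowE k l q c).card = k * l := by
  have : ((univ : Finset (ZMod q)).filter fun c => hd k q ∈ rowE k l q c)
      = (univ : Finset (ZMod q)).filter fun c => c.val < k*l := by
    ext c; simp [hd_mem_rowE]
  rw [this, card_val_lt hq (by omega)]

lemma countR_pt {i : Fin k} {y : ZMod q} :
    ((univ : Finset (ZMod q)).filter fun c => pt k q i y ∈ rowE k l q c).card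
      = if y.val < k*l ∧ (i : ℕ) = 0 then 0 else 1 := by
  split_ifs with h
  · rw [card_eq_zero, eq_empty_iff_forall_notMem]
    intro c hc
    rw [mem_filter, mem_rowE] at hc
    obtain ⟨-, rfl, h2⟩ := hc
    exact h2 h.1 h.2
  · have : ((univ : Finset (ZMod q)).filter fun c => pt k q i y ∈ rowE k l q c) = {y} := by
      ext c
      simp only [mem_filter, mem_univ, true_and, mem_rowE, mem_singleton]
      constructor
      · rintro ⟨rfl, -⟩; rfl
      · rintro rfl
        refine ⟨rfl, fun hy => ?_⟩
        intro hi
        exact h ⟨hy, hi⟩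
    rw [this, card_singleton]

include hq in
lemma countC_pt {i : Fin k} {y : ZMod q} :
    ((univ : Finset (Fin l)).filter fun g => pt k q i y ∈ colE k l q g).card
      = if (i : ℕ) = 0 ∧ y.val < k*l then 1 else 0 := by
  have hk0 : 0 < k := Nat.pos_of_ne_zero (NeZero.ne k)
  split_ifs with h
  · have hdiv : y.val / k < l := by
      rw [Nat.div_lt_iff_lt_mul hk0]
      calc y.val < k * l := h.2
      _ = l * k := Nat.mul_comm k l
    have : ((univ : Finset (Fin l)).filter fun g => pt k q i y ∈ colE k l q g)
        = {⟨y.val / k, hdiv⟩} := by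
      ext g
      simp only [mem_filter, mem_univ, true_and, mem_singleton, mem_colE' hq]
      constructor
      · rintro ⟨-, -, hg⟩
        exact Fin.ext hg
      · rintro rfl
        exact ⟨Fin.ext h.1, h.2, rfl⟩
    rw [this, card_singleton]
  · rw [card_eq_zero, eq_empty_iff_forall_notMem]
    intro g hg
    rw [mem_filter, mem_colE' hq] at hg
    obtain ⟨-, h1, h2, -⟩ := hg
    exact h ⟨by rw [h1, val_zero], h2⟩

lemma countC_hd :
    ((univ : Finset (Fin l)).filter fun g => hd k q ∈ colE k l q g).card = 0 := by
  rw [card_eq_zero, eq_empty_iff_forall_notMem]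
  intro g hg
  exact hd_not_mem_colE (mem_filter.1 hg).2

/-! ### disjointness of the three families -/

include hk hq in
lemma disj12 : Disjoint (E1 k l q) (E2 k l q) := by
  rw [disjoint_left]
  intro e he1 he2
  rw [E1, mem_image] at he1
  rw [E2, mem_image] at he2
  obtain ⟨⟨s, b⟩, -, rfl⟩ := he1
  obtain ⟨c, -, hc⟩ := he2
  exact linE_ne_rowE hk hq hc.symm

include hk hq in
lemma disj13 : Disjoint (E1 k l q) (E3 k l q) := by
  rw [disjoint_left]
  intro e he1 he3
  rw [E1, mem_image] at he1
  rw [E3, mem_image] at he3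
  obtain ⟨⟨s, b⟩, -, rfl⟩ := he1
  obtain ⟨g, -, hg⟩ := he3
  exact linE_ne_colE hk hq hg.symm

include hk in
lemma disj23 : Disjoint (E2 k l q) (E3 k l q) := by
  rw [disjoint_left]
  intro e he2 he3
  rw [E2, mem_image] at he2
  rw [E3, mem_image] at he3
  obtain ⟨c, -, rfl⟩ := he2
  obtain ⟨g, -, hg⟩ := he3
  exact rowE_ne_colE hk hg.symm

include hk hq in
lemma linE_injective :
    Function.Injective (fun p : Fin (k*l) × ZMod q => linE k l q p.1 p.2) := by
  rintro ⟨s, b⟩ ⟨s', b'⟩ h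
  obtain ⟨h1, h2⟩ := linE_inj hk hq h
  exact Prod.ext h1 h2

include hk in
lemma rowE_injective : Function.Injective (fun c : ZMod q => rowE k l q c) :=
  fun _ _ h => rowE_inj hk h

include hq in
lemma colE_injective : Function.Injective (fun g : Fin l => colE k l q g) :=
  fun _ _ h => colE_inj hq h

/-! ### degree computation -/

lemma degree_eq_card (E : Finset (Finset (Vt k q))) (v : Vt k q) :
    degree E v = (E.filter fun e => v ∈ e).card := by
  rw [degree]
  exact congrArg card (filter_congr_decidable _ _ _)

include hk hq in
lemma degree_split (v : Vt k q) :
    degree (Edges k l q) v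
      = ((univ : Finset (Fin (k*l) × ZMod q)).filter fun p => v ∈ linE k l q p.1 p.2).card
        + ((univ : Finset (ZMod q)).filter fun c => v ∈ rowE k l q c).card
        + ((univ : Finset (Fin l)).filter fun g => v ∈ colE k l q g).card := by
  have e1 : ((E1 k l q).filter fun e => v ∈ e).card
      = ((univ : Finset (Fin (k*l) × ZMod q)).filter fun p => v ∈ linE k l q p.1 p.2).card := by
    rw [E1, filter_image, card_image_of_injective _ (linE_injective hk hq)]
  have e2 : ((E2 k l q).filter fun e => v ∈ e).card
      = ((univ : Finset (ZMod q)).filter fun c => v ∈ rowE k l q c).card := by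
    rw [E2, filter_image, card_image_of_injective _ (rowE_injective hk)]
  have e3 : ((E3 k l q).filter fun e => v ∈ e).card
      = ((univ : Finset (Fin l)).filter fun g => v ∈ colE k l q g).card := by
    rw [E3, filter_image, card_image_of_injective _ (colE_injective hq)]
  rw [degree_eq_card, Edges, filter_union, filter_union,
    card_union_of_disjoint, card_union_of_disjoint, e1, e2, e3, Nat.add_assoc]
  · exact disjoint_filter_filter (disj23 hk)
  · exact Finset.disjoint_union_right.2
      ⟨disjoint_filter_filter (disj12 hk hq), disjoint_filter_filter (disj13 hk hq)⟩

include hk hq in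
lemma degree_hd_calc : degree (Edges k l q) (hd k q) = k * l := by
  rw [degree_split hk hq, countL_hd, countR_hd hq, countC_hd]
  omega

include hk hq in
lemma degree_pt_calc (i : Fin k) (y : ZMod q) :
    degree (Edges k l q) (pt k q i y) = k * l + 1 := by
  rw [degree_split hk hq, countL_pt hq, countR_pt, countC_pt hq]
  by_cases h1 : y.val < k*l <;> by_cases h2 : (i : ℕ) = 0 <;> simp [h1, h2]

include hk hq in
lemma uniform_calc : Uniform (Edges k l q) k := by
  intro e he
  rw [Edges, mem_union, mem_union] at he
  rcases he with he | he | he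
  · obtain ⟨⟨s, b⟩, -, rfl⟩ := mem_image.1 he
    exact card_linE
  · obtain ⟨c, -, rfl⟩ := mem_image.1 he
    exact card_rowE hk
  · obtain ⟨g, -, rfl⟩ := mem_image.1 he
    exact card_colE hq

/-! ### linearity -/

section prime
variable [Fact (Nat.Prime q)]

include hk hq in
lemma common_LL {s s' : Fin (k*l)} {b b' : ZMod q} (hne : (s, b) ≠ (s', b'))
    {u w : Vt k q} (hu1 : u ∈ linE k l q s b) (hu2 : u ∈ linE k l q s' b')
    (hw1 : w ∈ linE k l q s b) (hw2 : w ∈ linE k l q s' b') : u = w := by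
  obtain (⟨i, y⟩ | ⟨⟩) := u
  · obtain (⟨j, z⟩ | ⟨⟩) := w
    · rw [mem_linE] at hu1 hu2 hw1 hw2
      by_cases hs : s = s'
      · subst hs
        have hb : b = b' := add_left_cancel (hu1.symm.trans hu2)
        exact absurd (by rw [hb]) hne
      · have hsl : sl k l q s ≠ sl k l q s' := fun h => hs (sl_inj hq h)
        have e1 : (sl k l q s - sl k l q s') * ((i : ℕ) : ZMod q) = b' - b := by
          linear_combination hu1.symm.trans hu2
        have e2 : (sl k l q s - sl k l q s') * ((j : ℕ) : ZMod q) = b' - b := by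
          linear_combination hw1.symm.trans hw2
        have hij : i = j :=
          finCast_inj hq (mul_left_cancel₀ (sub_ne_zero.2 hsl) (e1.trans e2.symm))
        subst hij
        rw [hu1, hw1]
    · exact absurd hw1 hd_not_mem_linE
  · exact absurd hu1 hd_not_mem_linE

include hk hq in
lemma common_LR {s : Fin (k*l)} {b c : ZMod q}
    {u w : Vt k q} (hu1 : u ∈ linE k l q s b) (hu2 : u ∈ rowE k l q c)
    (hw1 : w ∈ linE k l q s b) (hw2 : w ∈ rowE k l q c) : u = w := by
  obtain (⟨i, y⟩ | ⟨⟩) := u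
  · obtain (⟨j, z⟩ | ⟨⟩) := w
    · rw [mem_linE] at hu1 hw1
      rw [mem_rowE] at hu2 hw2
      obtain ⟨rfl, -⟩ := hu2
      obtain ⟨rfl, -⟩ := hw2
      have : sl k l q s * ((i : ℕ) : ZMod q) = sl k l q s * ((j : ℕ) : ZMod q) := by
        linear_combination hu1.symm.trans hw1
      rw [finCast_inj hq (mul_left_cancel₀ (sl_ne_zero hq s) this)]
    · exact absurd hw1 hd_not_mem_linE
  · exact absurd hu1 hd_not_mem_linE

include hq in
lemma common_LC {s : Fin (k*l)} {b : ZMod q} {g : Fin l}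
    {u w : Vt k q} (hu1 : u ∈ linE k l q s b) (hu2 : u ∈ colE k l q g)
    (hw1 : w ∈ linE k l q s b) (hw2 : w ∈ colE k l q g) : u = w := by
  obtain (⟨i, y⟩ | ⟨⟩) := u
  · obtain (⟨j, z⟩ | ⟨⟩) := w
    · obtain ⟨rfl, -⟩ := mem_colE.1 hu2
      obtain ⟨rfl, -⟩ := mem_colE.1 hw2
      rw [mem_linE, val_zero] at hu1 hw1
      simp only [Nat.cast_zero, mul_zero, zero_add] at hu1 hw1
      rw [hu1, hw1]
    · exact absurd hw1 hd_not_mem_linE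
  · exact absurd hu1 hd_not_mem_linE

lemma common_RR {c c' : ZMod q} (hne : c ≠ c')
    {u w : Vt k q} (hu1 : u ∈ rowE k l q c) (hu2 : u ∈ rowE k l q c')
    (hw1 : w ∈ rowE k l q c) (hw2 : w ∈ rowE k l q c') : u = w := by
  obtain (⟨i, y⟩ | ⟨⟩) := u
  · obtain ⟨rfl, -⟩ := mem_rowE.1 hu1
    obtain ⟨h, -⟩ := mem_rowE.1 hu2
    exact absurd h hne
  · obtain (⟨j, z⟩ | ⟨⟩) := w
    · obtain ⟨rfl, -⟩ := mem_rowE.1 hw1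
      obtain ⟨h, -⟩ := mem_rowE.1 hw2
      exact absurd h hne
    · rfl

lemma common_RC {c : ZMod q} {g : Fin l}
    {u w : Vt k q} (hu1 : u ∈ rowE k l q c) (hu2 : u ∈ colE k l q g)
    (hw1 : w ∈ rowE k l q c) (hw2 : w ∈ colE k l q g) : u = w := by
  obtain (⟨i, y⟩ | ⟨⟩) := u
  · obtain (⟨j, z⟩ | ⟨⟩) := w
    · obtain ⟨rfl, -⟩ := mem_colE.1 hu2
      obtain ⟨rfl, -⟩ := mem_colE.1 hw2
      obtain ⟨rfl, -⟩ := mem_rowE.1 hu1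
      obtain ⟨h, -⟩ := mem_rowE.1 hw1
      rw [h]
    · exact absurd hw2 hd_not_mem_colE
  · exact absurd hu2 hd_not_mem_colE

include hq in
lemma common_CC {g g' : Fin l} (hne : g ≠ g')
    {u w : Vt k q} (hu1 : u ∈ colE k l q g) (hu2 : u ∈ colE k l q g')
    (hw1 : w ∈ colE k l q g) (hw2 : w ∈ colE k l q g') : u = w := by
  obtain (⟨i, y⟩ | ⟨⟩) := u
  · rw [mem_colE' hq] at hu1 hu2
    exact absurd (Fin.ext (hu1.2.2.trans hu2.2.2.symm)) hne
  · exact absurd hu1 hd_not_mem_colE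

include hk hq in
lemma linear_calc : Linear (Edges k l q) := by
  intro e he f hf hne
  rw [Finset.card_le_one]
  intro u hu w hw
  simp only [Finset.mem_inter] at hu hw
  rw [Edges, mem_union, mem_union] at he hf
  rcases he with he | he | he <;> rcases hf with hf | hf | hf
  · obtain ⟨⟨s, b⟩, -, rfl⟩ := mem_image.1 he
    obtain ⟨⟨s', b'⟩, -, rfl⟩ := mem_image.1 hf
    exact common_LL hk hq
      (fun hp => hne (congrArg (fun p : Fin (k*l) × ZMod q => linE k l q p.1 p.2) hp))
      hu.1 hu.2 hw.1 hw.2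
  · obtain ⟨⟨s, b⟩, -, rfl⟩ := mem_image.1 he
    obtain ⟨c, -, rfl⟩ := mem_image.1 hf
    exact common_LR hk hq hu.1 hu.2 hw.1 hw.2
  · obtain ⟨⟨s, b⟩, -, rfl⟩ := mem_image.1 he
    obtain ⟨g, -, rfl⟩ := mem_image.1 hf
    exact common_LC hq hu.1 hu.2 hw.1 hw.2
  · obtain ⟨c, -, rfl⟩ := mem_image.1 he
    obtain ⟨⟨s, b⟩, -, rfl⟩ := mem_image.1 hf
    exact common_LR hk hq hu.2 hu.1 hw.2 hw.1
  · obtain ⟨c, -, rfl⟩ := mem_image.1 he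
    obtain ⟨c', -, rfl⟩ := mem_image.1 hf
    exact common_RR (fun hcc => hne (by rw [hcc])) hu.1 hu.2 hw.1 hw.2
  · obtain ⟨c, -, rfl⟩ := mem_image.1 he
    obtain ⟨g, -, rfl⟩ := mem_image.1 hf
    exact common_RC hu.1 hu.2 hw.1 hw.2
  · obtain ⟨g, -, rfl⟩ := mem_image.1 he
    obtain ⟨⟨s, b⟩, -, rfl⟩ := mem_image.1 hf
    exact common_LC hq hu.2 hu.1 hw.2 hw.1
  · obtain ⟨g, -, rfl⟩ := mem_image.1 he
    obtain ⟨c, -, rfl⟩ := mem_image.1 hf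
    exact common_RC hu.2 hu.1 hw.2 hw.1
  · obtain ⟨g, -, rfl⟩ := mem_image.1 he
    obtain ⟨g', -, rfl⟩ := mem_image.1 hf
    exact common_CC hq (fun hgg => hne (by rw [hgg])) hu.1 hu.2 hw.1 hw.2

end prime
end hyp
end ExtProof

/-- For all `k ≥ 2` and `ℓ ≥ 0` there exists a `(kℓ+1)`-extendable linear `k`-uniform
hypergraph: all vertices have degree `kℓ+1` except one (the head) of degree `kℓ`. -/
theorem extendable_exists (k l : ℕ) (hk : 2 ≤ k) :
    ∃ (V : Type) (_ : Finite V) (E : Finset (Finset V)),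
      Uniform E k ∧ Linear E ∧
      ∃ head : V, degree E head = k * l ∧
        ∀ v : V, v ≠ head → degree E v = k * l + 1 := by
  obtain ⟨q, hqle, hqp⟩ := Nat.exists_infinite_primes (k * l + k + 1)
  haveI : Fact (Nat.Prime q) := ⟨hqp⟩
  haveI : NeZero q := ⟨hqp.pos.ne'⟩
  haveI : NeZero k := ⟨by omega⟩
  have hq : k * l + k < q := by omega
  refine ⟨ExtProof.Vt k q, inferInstance, ExtProof.Edges k l q,
    ExtProof.uniform_calc hk hq, ExtProof.linear_calc hk hq,
    ExtProof.hd k q, ExtProof.degree_hd_calc hk hq, ?_⟩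
  intro v hv
  obtain (⟨i, y⟩ | ⟨⟩) := v
  · exact ExtProof.degree_pt_calc hk hq i y
  · exact absurd rfl hv
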